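/- arXiv:1503.01130 — 3 statements merged into one kernel-verified Lean document; each statement's English description precedes it below -/
import Mathlib

section
/- Let φ be a holomorphic self-map of the unit disc 𝔻 such that sup_{z∈𝔻} |φ(z)| < 1 and φ is a multiplier of 𝒟. Then for every u ∈ 𝒟 the weighted composition operator W_{u,φ} : f ↦ u·(f∘φ) is bounded on the Dirichlet space 𝒟. -/
open Complex MeasureTheory Metric Set Filter

noncomputable section

/-- The open unit disc in the complex plane. -/
def unitDisc : Set ℂ := Metric.ball 0 1

/-- The square of the Dirichlet norm:
`‖f‖²_𝒟 = |f(0)|² + ∫_𝔻 |f′(z)|² dA(z)`, with `A` normalized area measure. -/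
def dirNormSq (f : ℂ → ℂ) : ℝ :=
  ‖f 0‖ ^ 2 + (1 / Real.pi) * ∫ z in unitDisc, ‖deriv f z‖ ^ 2

/-- Membership in the Dirichlet space `𝒟`: `f` is holomorphic on `𝔻` and
`|f′|²` is integrable over `𝔻`. -/
def MemDirichlet (f : ℂ → ℂ) : Prop :=
  DifferentiableOn ℂ f unitDisc ∧
    IntegrableOn (fun z : ℂ => ‖deriv f z‖ ^ 2) unitDisc

/-- The weighted composition operator `W_{u,φ} : f ↦ u·(f∘φ)` is bounded
on the Dirichlet space: there is a constant `C` with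
`‖u·(f∘φ)‖²_𝒟 ≤ C ‖f‖²_𝒟` (and `u·(f∘φ) ∈ 𝒟`) for all `f ∈ 𝒟`. -/
def WCOBounded (u φ : ℂ → ℂ) : Prop :=
  ∃ C : ℝ, 0 ≤ C ∧ ∀ f : ℂ → ℂ, MemDirichlet f →
    MemDirichlet (fun z => u z * f (φ z)) ∧
      dirNormSq (fun z => u z * f (φ z)) ≤ C * dirNormSq f

lemma stepA {r a b : ℝ} (h0 : 0 ≤ r) (hra : r < a) (hab : a < b) (hb1 : b < 1)
    {g : ℂ → ℂ} (hg : DifferentiableOn ℂ g unitDisc)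
    {w : ℂ} (hw : ‖w‖ ≤ r) {ρ : ℝ} (hρ : ρ ∈ Set.Ioo a b) :
    2 * Real.pi * (a - r) * ‖g w‖ ≤ ∫ θ in (0:ℝ)..(2*Real.pi), ‖g (circleMap 0 ρ θ)‖ := by
  have hρ0 : (0:ℝ) < ρ := lt_trans (lt_of_le_of_lt h0 hra) hρ.1
  have hρ1 : ρ < 1 := lt_trans hρ.2 hb1
  have hsub : closedBall (0:ℂ) ρ ⊆ unitDisc := closedBall_subset_ball hρ1
  have hd' : DifferentiableOn ℂ g (closedBall 0 ρ) := hg.mono hsub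
  have hwρ : w ∈ ball (0:ℂ) ρ := by
    simp only [mem_ball, dist_zero_right]
    exact lt_of_le_of_lt hw (lt_trans hra hρ.1)
  have key := hd'.circleIntegral_sub_inv_smul hwρ
  have hmem : ∀ θ : ℝ, circleMap 0 ρ θ ∈ unitDisc := by
    intro θ
    simp only [unitDisc, mem_ball, dist_zero_right, norm_circleMap_zero,
      _root_.abs_of_pos hρ0]
    exact hρ1
  have hgc : Continuous fun θ : ℝ => g (circleMap 0 ρ θ) := by
    refine continuous_iff_continuousAt.2 fun θ => ?_
    exact (hg.continuousOn.continuousAt (isOpen_ball.mem_nhds (hmem θ))).comp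
      (continuous_circleMap 0 ρ).continuousAt
  have hne : ∀ θ : ℝ, a - r ≤ ‖circleMap 0 ρ θ - w‖ := by
    intro θ
    have h1 : ‖circleMap 0 ρ θ‖ = ρ := by
      rw [norm_circleMap_zero, _root_.abs_of_pos hρ0]
    have h2 := norm_sub_norm_le (circleMap 0 ρ θ) w
    rw [h1] at h2
    have := hρ.1; linarith
  have har : (0:ℝ) < a - r := by linarith
  have hnz : ∀ θ : ℝ, circleMap 0 ρ θ - w ≠ 0 := by
    intro θ h
    have := hne θ; rw [h] at this; simp at this; linarith
  have h2pi : ‖(2 * (Real.pi:ℂ) * I)‖ = 2 * Real.pi := by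
    simp [map_mul, Complex.norm_real, _root_.abs_of_nonneg Real.pi_nonneg]
  have hnorm : ‖(2 * (Real.pi:ℂ) * I) • g w‖ = 2 * Real.pi * ‖g w‖ := by
    rw [norm_smul, h2pi]
  rw [← key] at hnorm
  have hden : Continuous fun θ : ℝ => (circleMap 0 ρ θ - w)⁻¹ :=
    (((continuous_circleMap 0 ρ).sub continuous_const).inv₀ hnz)
  have hle : ‖∮ z in C(0, ρ), (z - w)⁻¹ • g z‖ ≤
      ∫ θ in (0:ℝ)..(2*Real.pi), (a - r)⁻¹ * ‖g (circleMap 0 ρ θ)‖ := by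
    rw [circleIntegral]
    refine le_trans (intervalIntegral.norm_integral_le_integral_norm (by positivity)) ?_
    refine intervalIntegral.integral_mono_on (by positivity) ?_ ?_ ?_
    · apply Continuous.intervalIntegrable
      have : Continuous fun θ : ℝ => deriv (circleMap 0 ρ) θ • (circleMap 0 ρ θ - w)⁻¹ • g (circleMap 0 ρ θ) := by
        simp only [deriv_circleMap]
        exact ((continuous_circleMap 0 ρ).mul continuous_const).smul (hden.smul hgc)
      exact this.norm
    · exact (continuous_const.mul hgc.norm).intervalIntegrable _ _
    · intro θ _
      rw [deriv_circleMap, norm_smul, norm_smul]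
      simp only [norm_mul, Complex.norm_I, mul_one, norm_circleMap_zero,
        _root_.abs_of_pos hρ0, map_inv₀, norm_inv]
      have hG : (0:ℝ) ≤ ‖g (circleMap 0 ρ θ)‖ := (norm_nonneg _)
      have h1 : (‖circleMap 0 ρ θ - w‖)⁻¹ ≤ (a - r)⁻¹ :=
        inv_anti₀ har (hne θ)
      calc ρ * ((‖circleMap 0 ρ θ - w‖)⁻¹ * ‖g (circleMap 0 ρ θ)‖)
          ≤ 1 * ((a - r)⁻¹ * ‖g (circleMap 0 ρ θ)‖) := by
            apply mul_le_mul hρ1.le (by gcongr) (by positivity) zero_le_one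
        _ = (a - r)⁻¹ * ‖g (circleMap 0 ρ θ)‖ := one_mul _
  rw [hnorm] at hle
  rw [intervalIntegral.integral_const_mul] at hle
  have hπ : 2 * Real.pi * (a - r) * ‖g w‖ = (a - r) * (2 * Real.pi * ‖g w‖) := by ring
  rw [hπ]
  calc (a - r) * (2 * Real.pi * ‖g w‖) ≤ (a - r) * ((a - r)⁻¹ * ∫ θ in (0:ℝ)..(2*Real.pi), ‖g (circleMap 0 ρ θ)‖) := by
        apply mul_le_mul_of_nonneg_left hle har.le
    _ = ∫ θ in (0:ℝ)..(2*Real.pi), ‖g (circleMap 0 ρ θ)‖ := by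
        field_simp

lemma pcs (ρ θ : ℝ) : Complex.polarCoord.symm (ρ, θ) = circleMap 0 ρ θ := by
  simp [circleMap, Complex.exp_mul_I]

lemma stepB {r a b : ℝ} (h0 : 0 ≤ r) (hra : r < a) (hab : a < b) (hb1 : b < 1)
    {g : ℂ → ℂ} (hg : DifferentiableOn ℂ g unitDisc)
    {w : ℂ} (hw : ‖w‖ ≤ r) {ρ : ℝ} (hρ : ρ ∈ Set.Ioo a b) :
    2 * Real.pi * (a - r) * ‖g w‖ ≤ ∫ θ in Set.Ioo (-Real.pi) Real.pi, ‖g (circleMap 0 ρ θ)‖ := by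
  refine le_trans (stepA h0 hra hab hb1 hg hw hρ) (le_of_eq ?_)
  have hper : Function.Periodic (fun θ : ℝ => ‖g (circleMap 0 ρ θ)‖) (2 * Real.pi) := by
    intro θ
    simp [(periodic_circleMap 0 ρ) θ]
  have h1 := hper.intervalIntegral_add_eq 0 (-Real.pi)
  have h2 : (0:ℝ) + 2 * Real.pi = 2 * Real.pi := by ring
  have h3 : -Real.pi + 2 * Real.pi = Real.pi := by ring
  rw [h2, h3] at h1
  rw [h1, intervalIntegral.integral_of_le (by linarith [Real.pi_pos]), integral_Ioc_eq_integral_Ioo]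

lemma stepC {a b : ℝ} (ha : 0 < a) {g : ℂ → ℂ} :
    ∫ p in (Set.Ioo a b ×ˢ Set.Ioo (-Real.pi) Real.pi),
        p.1 * ‖g (circleMap 0 p.1 p.2)‖ =
      ∫ z in {z : ℂ | ‖z‖ ∈ Set.Ioo a b}, ‖g z‖ := by
  set T : Set ℂ := {z : ℂ | ‖z‖ ∈ Set.Ioo a b} with hT
  set S : Set (ℝ × ℝ) := Set.Ioo a b ×ˢ Set.Ioo (-Real.pi) Real.pi with hS
  have hTmeas : MeasurableSet T :=
    continuous_norm.measurable measurableSet_Ioo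
  have hSmeas : MeasurableSet S := measurableSet_Ioo.prod measurableSet_Ioo
  have e1 := Complex.integral_comp_polarCoord_symm (T.indicator fun z => ‖g z‖)
  rw [integral_indicator hTmeas] at e1
  rw [← e1]
  have hsub : S ⊆ polarCoord.target := by
    rw [polarCoord_target]
    intro p hp
    exact ⟨lt_trans ha hp.1.1, hp.2⟩
  have hptwise : ∀ p ∈ polarCoord.target,
      p.1 • (T.indicator fun z => ‖g z‖) (Complex.polarCoord.symm p) =
        S.indicator (fun p : ℝ × ℝ => p.1 * ‖g (Complex.polarCoord.symm p)‖) p := by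
    intro p hp
    rw [polarCoord_target] at hp
    have habs : ‖Complex.polarCoord.symm p‖ = p.1 := by
      rw [Complex.norm_polarCoord_symm, _root_.abs_of_pos hp.1]
    by_cases h : p.1 ∈ Set.Ioo a b
    · rw [Set.indicator_of_mem, Set.indicator_of_mem]
      · rfl
      · exact ⟨h, hp.2⟩
      · rw [hT, Set.mem_setOf_eq, habs]; exact h
    · rw [Set.indicator_of_notMem, Set.indicator_of_notMem, smul_zero]
      · intro hmem; exact h hmem.1
      · rw [hT, Set.mem_setOf_eq, habs]; exact h
  rw [setIntegral_congr_fun polarCoord.open_target.measurableSet hptwise]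
  rw [setIntegral_indicator hSmeas, Set.inter_eq_self_of_subset_right hsub]
  apply setIntegral_congr_fun hSmeas
  intro p _
  simp only []
  rw [show p = (p.1, p.2) from rfl, pcs p.1 p.2]

lemma inhomog {r a b : ℝ} (h0 : 0 ≤ r) (hra : r < a) (hab : a < b) (hb1 : b < 1)
    {g : ℂ → ℂ} (hg : DifferentiableOn ℂ g unitDisc)
    (hgi : IntegrableOn (fun z : ℂ => ‖g z‖ ^ 2) unitDisc)
    {w : ℂ} (hw : ‖w‖ ≤ r) :
    (a * (2 * Real.pi * (a - r) * ‖g w‖)) * (b - a) ≤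
      (Real.pi + ∫ z in unitDisc, ‖g z‖ ^ 2) / 2 := by
  have ha : (0:ℝ) < a := lt_of_le_of_lt h0 hra
  set T : Set ℂ := {z : ℂ | ‖z‖ ∈ Set.Ioo a b} with hT
  set S : Set (ℝ × ℝ) := Set.Ioo a b ×ˢ Set.Ioo (-Real.pi) Real.pi with hS
  set F : ℝ × ℝ → ℝ := fun p => p.1 * ‖g (circleMap 0 p.1 p.2)‖ with hF
  have hTmeas : MeasurableSet T := continuous_norm.measurable measurableSet_Ioo
  have hTsub : T ⊆ unitDisc := by
    intro z hz
    simp only [unitDisc, mem_ball, dist_zero_right]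
    exact lt_trans hz.2 hb1
  -- continuity of ψ
  have hψc : Continuous fun p : ℝ × ℝ => circleMap 0 p.1 p.2 := by
    simp only [circleMap, zero_add]
    exact (Complex.continuous_ofReal.comp continuous_fst).mul
      (Complex.continuous_exp.comp ((Complex.continuous_ofReal.comp continuous_snd).mul
        continuous_const))
  -- integrability of F on S
  have hKmaps : Set.MapsTo (fun p : ℝ × ℝ => circleMap 0 p.1 p.2)
      (Set.Icc a b ×ˢ Set.Icc (-Real.pi) Real.pi) unitDisc := by
    intro p hp
    simp only [unitDisc, mem_ball, dist_zero_right, norm_circleMap_zero]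
    rw [_root_.abs_of_pos (lt_of_lt_of_le ha hp.1.1)]
    exact lt_of_le_of_lt hp.1.2 hb1
  have hci : ContinuousOn F (Set.Icc a b ×ˢ Set.Icc (-Real.pi) Real.pi) :=
    (continuous_fst.continuousOn).mul
      ((hg.continuousOn.comp hψc.continuousOn hKmaps).norm)
  have hIS : IntegrableOn F S :=
    (hci.integrableOn_compact (isCompact_Icc.prod isCompact_Icc)).mono_set
      (Set.prod_mono Set.Ioo_subset_Icc_self Set.Ioo_subset_Icc_self)
  -- Fubini
  have hrestr : (volume : Measure (ℝ × ℝ)).restrict S =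
      (volume.restrict (Set.Ioo a b)).prod (volume.restrict (Set.Ioo (-Real.pi) Real.pi)) := by
    rw [Measure.volume_eq_prod, Measure.prod_restrict]
  have hI2 : Integrable F
      ((volume.restrict (Set.Ioo a b)).prod (volume.restrict (Set.Ioo (-Real.pi) Real.pi))) := by
    rw [← hrestr]; exact hIS
  have hFub : ∫ p in S, F p =
      ∫ ρ in Set.Ioo a b, ∫ θ in Set.Ioo (-Real.pi) Real.pi, F (ρ, θ) := by
    rw [show (∫ p in S, F p) = ∫ p, F p ∂(volume.restrict S) from rfl, hrestr]
    exact integral_prod F hI2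
  -- lower bound for inner integrals
  set m : ℝ := 2 * Real.pi * (a - r) * ‖g w‖ with hm
  have hm0 : 0 ≤ m := by
    have := Real.pi_pos
    have : (0:ℝ) ≤ 2 * Real.pi * (a - r) := by nlinarith
    positivity
  have hinner : ∀ ρ ∈ Set.Ioo a b,
      a * m ≤ ∫ θ in Set.Ioo (-Real.pi) Real.pi, F (ρ, θ) := by
    intro ρ hρ
    have : ∫ θ in Set.Ioo (-Real.pi) Real.pi, F (ρ, θ) =
        ρ * ∫ θ in Set.Ioo (-Real.pi) Real.pi, ‖g (circleMap 0 ρ θ)‖ := by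
      rw [hF]; exact integral_const_mul _ _
    rw [this]
    exact mul_le_mul hρ.1.le (stepB h0 hra hab hb1 hg hw hρ) hm0 (le_of_lt (lt_trans ha hρ.1))
  -- lower bound for outer integral
  have houter : (a * m) * (b - a) ≤ ∫ p in S, F p := by
    rw [hFub]
    have h1 := setIntegral_ge_of_const_le measurableSet_Ioo
      (by rw [Real.volume_Ioo]; exact ENNReal.ofReal_ne_top)
      hinner hI2.integral_prod_left
    rw [Real.volume_real_Ioo, max_eq_left (by linarith), smul_eq_mul] at h1
    linarith
  -- upper bound
  have hgi_T : IntegrableOn (fun z : ℂ => ‖g z‖ ^ 2) T := hgi.mono_set hTsub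
  have hvolT : volume T < ⊤ := lt_of_le_of_lt (measure_mono hTsub) measure_ball_lt_top
  have hconst : IntegrableOn (fun _ : ℂ => (1:ℝ)) T := by
    refine integrableOn_const hvolT.ne
  have hdom : IntegrableOn (fun z : ℂ => (1 + ‖g z‖ ^ 2) / 2) T :=
    ((hconst.add hgi_T).div_const 2)
  have hgT : IntegrableOn (fun z : ℂ => ‖g z‖) T := by
    refine hdom.mono' (((hg.continuousOn.mono hTsub).norm).aestronglyMeasurable hTmeas) ?_
    refine (ae_restrict_iff' hTmeas).2 (Filter.Eventually.of_forall fun z _ => ?_)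
    rw [Real.norm_eq_abs, _root_.abs_of_nonneg (norm_nonneg _)]
    nlinarith [sq_nonneg (‖g z‖ - 1)]
  have hTbound : ∫ z in T, ‖g z‖ ≤ (Real.pi + ∫ z in unitDisc, ‖g z‖ ^ 2) / 2 := by
    have h1 : ∫ z in T, ‖g z‖ ≤ ∫ z in T, (1 + ‖g z‖ ^ 2) / 2 := by
      refine setIntegral_mono_on hgT hdom hTmeas fun z _ => ?_
      nlinarith [sq_nonneg (‖g z‖ - 1)]
    have h2 : ∫ z in T, (1 + ‖g z‖ ^ 2) / 2 =
        ((volume T).toReal + ∫ z in T, ‖g z‖ ^ 2) / 2 := by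
      rw [integral_div, integral_add hconst hgi_T, setIntegral_const, smul_eq_mul, mul_one, measureReal_def]
    have h3 : (volume T).toReal ≤ Real.pi := by
      have hne : volume (ball (0:ℂ) 1) ≠ ⊤ := by
        rw [Complex.volume_ball]
        exact ENNReal.mul_ne_top (by simp) ENNReal.coe_ne_top
      have hle : volume T ≤ volume (ball (0:ℂ) 1) := measure_mono hTsub
      have hv : (volume (ball (0:ℂ) 1)).toReal = Real.pi := by
        rw [Complex.volume_ball]; simp
      rw [← hv]
      exact ENNReal.toReal_mono hne hle
    have h4 : ∫ z in T, ‖g z‖ ^ 2 ≤ ∫ z in unitDisc, ‖g z‖ ^ 2 :=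
      setIntegral_mono_set hgi
        (Filter.Eventually.of_forall fun z => by positivity)
        (HasSubset.Subset.eventuallyLE hTsub)
    calc ∫ z in T, ‖g z‖ ≤ ((volume T).toReal + ∫ z in T, ‖g z‖ ^ 2) / 2 := by rw [← h2]; exact h1
      _ ≤ (Real.pi + ∫ z in unitDisc, ‖g z‖ ^ 2) / 2 := by linarith
  calc (a * m) * (b - a) ≤ ∫ p in S, F p := houter
    _ = ∫ z in T, ‖g z‖ := stepC ha
    _ ≤ (Real.pi + ∫ z in unitDisc, ‖g z‖ ^ 2) / 2 := hTbound

lemma sq_bound_aux {D t x p : ℝ} (hD : 0 < D) (ht : 0 < t) (hx : 0 ≤ x)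
    (h : D * (t * x) ≤ p) : x ^ 2 ≤ p ^ 2 / (D ^ 2 * t ^ 2) := by
  have h1 : 0 ≤ D * (t * x) := by positivity
  have h2 := mul_self_le_mul_self h1 h
  rw [le_div_iff₀ (by positivity)]
  nlinarith [h2]

lemma keyA {r : ℝ} (h0 : 0 ≤ r) (hr1 : r < 1) :
    ∃ K : ℝ, 0 ≤ K ∧ ∀ g : ℂ → ℂ, DifferentiableOn ℂ g unitDisc →
      IntegrableOn (fun z : ℂ => ‖g z‖ ^ 2) unitDisc →
      ∀ w : ℂ, ‖w‖ ≤ r → ‖g w‖ ^ 2 ≤ K * ∫ z in unitDisc, ‖g z‖ ^ 2 := by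
  set a : ℝ := (2*r+1)/3 with hadef
  set b : ℝ := (r+2)/3 with hbdef
  have hra : r < a := by rw [hadef]; linarith
  have hab : a < b := by rw [hadef, hbdef]; linarith
  have hb1 : b < 1 := by rw [hbdef]; linarith
  have ha0 : 0 < a := lt_of_le_of_lt h0 hra
  have hπ := Real.pi_pos
  set D : ℝ := a * (2 * Real.pi * (a - r)) * (b - a) with hDdef
  have hD0 : 0 < D := by
    apply mul_pos (mul_pos ha0 (by nlinarith)) (by linarith)
  refine ⟨Real.pi / D ^ 2, by positivity, ?_⟩
  intro g hg hgi w hw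
  set I : ℝ := ∫ z in unitDisc, ‖g z‖ ^ 2 with hIdef
  have hI0 : 0 ≤ I := setIntegral_nonneg measurableSet_ball (fun z _ => by positivity)
  have hscale : ∀ t : ℝ, 0 < t → D * (t * ‖g w‖) ≤ (Real.pi + t ^ 2 * I) / 2 := by
    intro t ht
    have hgd : DifferentiableOn ℂ (fun z => (t:ℂ) * g z) unitDisc :=
      hg.const_mul _
    have heq : (fun z : ℂ => ‖(t:ℂ) * g z‖ ^ 2) = fun z : ℂ => t ^ 2 * ‖g z‖ ^ 2 := by
      funext z
      rw [norm_mul, mul_pow, Complex.norm_real, Real.norm_eq_abs, _root_.sq_abs]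
    have hgi' : IntegrableOn (fun z : ℂ => ‖(t:ℂ) * g z‖ ^ 2) unitDisc := by
      rw [heq]; exact hgi.const_mul _
    have h := inhomog h0 hra hab hb1 hgd hgi' hw
    have hint : ∫ z in unitDisc, ‖(t:ℂ) * g z‖ ^ 2 = t ^ 2 * I := by
      rw [heq, hIdef]; exact integral_const_mul _ _
    rw [hint] at h
    have hnorm : ‖(t:ℂ) * g w‖ = t * ‖g w‖ := by
      rw [norm_mul, Complex.norm_real, Real.norm_eq_abs, _root_.abs_of_pos ht]
    rw [hnorm] at h
    calc D * (t * ‖g w‖) = a * (2 * Real.pi * (a - r) * (t * ‖g w‖)) * (b - a) := by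
          rw [hDdef]; ring
      _ ≤ (Real.pi + t ^ 2 * I) / 2 := h
  rcases eq_or_lt_of_le hI0 with hI | hI
  · -- I = 0
    have hgw : ‖g w‖ = 0 := by
      by_contra hne
      have hgw0 : 0 < ‖g w‖ := lt_of_le_of_ne (norm_nonneg _) (Ne.symm hne)
      have ht : 0 < Real.pi / (D * ‖g w‖) := by positivity
      have h := hscale _ ht
      rw [← hI] at h
      have h1 : Real.pi / (D * ‖g w‖) * ‖g w‖ = Real.pi / D := by
        rw [div_mul_eq_mul_div, mul_comm D ‖g w‖, ← div_div, mul_div_assoc,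
          div_self (ne_of_gt hgw0), mul_one]
      have h2 : D * (Real.pi / D) = Real.pi := by
        field_simp
      rw [h1, h2] at h
      nlinarith
    rw [hgw, ← hI]
    norm_num
  · -- I > 0
    set t : ℝ := Real.sqrt (Real.pi / I) with htdef
    have ht0 : 0 < t := Real.sqrt_pos.2 (by positivity)
    have ht2 : t ^ 2 = Real.pi / I := Real.sq_sqrt (by positivity)
    have h := hscale t ht0
    clear_value D
    have hrw : (Real.pi + Real.pi / I * I) / 2 = Real.pi := by
      field_simp; norm_num
    rw [ht2, hrw] at h
    have e : ‖g w‖ ^ 2 ≤ Real.pi ^ 2 / (D ^ 2 * t ^ 2) :=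
      sq_bound_aux hD0 ht0 (norm_nonneg _) h
    rw [ht2] at e
    calc ‖g w‖ ^ 2 ≤ Real.pi ^ 2 / (D ^ 2 * (Real.pi / I)) := e
      _ = Real.pi / D ^ 2 * I := by field_simp

lemma segBound {r : ℝ} (h0 : 0 ≤ r) (hr1 : r < 1) {f : ℂ → ℂ}
    (hf : DifferentiableOn ℂ f unitDisc) {C : ℝ}
    (hb : ∀ ζ : ℂ, ‖ζ‖ ≤ r → ‖deriv f ζ‖ ≤ C) {w : ℂ} (hw : ‖w‖ ≤ r) :
    ‖f w‖ ≤ ‖f 0‖ + C := by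
  have hmem : ∀ t ∈ Set.Icc (0:ℝ) 1, ‖(t:ℂ) * w‖ ≤ r := by
    intro t ht
    rw [norm_mul, Complex.norm_real, Real.norm_eq_abs, _root_.abs_of_nonneg ht.1]
    nlinarith [norm_nonneg w, ht.2, ht.1]
  have hC0 : 0 ≤ C := le_trans (norm_nonneg _) (hb 0 (by simpa using h0))
  have hderiv : ∀ t ∈ Set.Icc (0:ℝ) 1,
      HasDerivWithinAt (fun t : ℝ => f ((t:ℂ) * w)) (deriv f ((t:ℂ) * w) * w)
        (Set.Icc 0 1) t := by
    intro t ht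
    have hz : ((t:ℂ) * w) ∈ unitDisc := by
      simp only [unitDisc, mem_ball, dist_zero_right]
      exact lt_of_le_of_lt (hmem t ht) hr1
    have hfd : HasDerivAt f (deriv f ((t:ℂ) * w)) ((t:ℂ) * w) :=
      (hf.differentiableAt (isOpen_ball.mem_nhds hz)).hasDerivAt
    have hsw : HasDerivAt (fun s : ℂ => s * w) w ((t:ℝ):ℂ) := by
      simpa using (hasDerivAt_id ((t:ℝ):ℂ)).mul_const w
    have hG : HasDerivAt (fun s : ℂ => f (s * w)) (deriv f ((t:ℂ) * w) * w) ((t:ℝ):ℂ) := by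
      exact hfd.comp ((t:ℝ):ℂ) hsw
    exact (hG.comp_ofReal).hasDerivWithinAt
  have hbound : ∀ t ∈ Set.Ico (0:ℝ) 1, ‖deriv f ((t:ℂ) * w) * w‖ ≤ C := by
    intro t ht
    rw [norm_mul]
    have h1 : ‖deriv f ((t:ℂ) * w)‖ ≤ C := hb _ (hmem t ⟨ht.1, ht.2.le⟩)
    have h2 : ‖w‖ ≤ 1 := le_trans hw hr1.le
    nlinarith [norm_nonneg (deriv f ((t:ℂ) * w)), norm_nonneg w]
  have key := norm_image_sub_le_of_norm_deriv_le_segment' hderiv hbound 1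
    (Set.right_mem_Icc.2 zero_le_one)
  simp only [Complex.ofReal_one, Complex.ofReal_zero, one_mul, zero_mul, sub_zero,
    mul_one] at key
  calc ‖f w‖ = ‖f 0 + (f w - f 0)‖ := by ring_nf
    _ ≤ ‖f 0‖ + ‖f w - f 0‖ := norm_add_le _ _
    _ ≤ ‖f 0‖ + C := by linarith

set_option maxHeartbeats 1000000

/-- If `φ` is a holomorphic self-map of `𝔻` with `sup_{z∈𝔻}|φ(z)| < 1` which is
a multiplier of `𝒟`, then `W_{u,φ}` is bounded on `𝒟` for every `u ∈ 𝒟`. -/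
theorem wco_bounded_of_sup_lt_one_and_multiplier (φ : ℂ → ℂ)
    (hd : DifferentiableOn ℂ φ unitDisc)
    (hm : Set.MapsTo φ unitDisc unitDisc)
    (hsup : ∃ r : ℝ, r < 1 ∧ ∀ z ∈ unitDisc, ‖φ z‖ ≤ r)
    (hmult : ∀ f : ℂ → ℂ, MemDirichlet f → MemDirichlet fun z => φ z * f z) :
    ∀ u : ℂ → ℂ, MemDirichlet u → WCOBounded u φ := by
  obtain ⟨r₀, hr₀1, hφr₀⟩ := hsup
  set r : ℝ := max r₀ 0 with hrdef
  have h0 : 0 ≤ r := le_max_right _ _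
  have hr1 : r < 1 := max_lt hr₀1 zero_lt_one
  have hφr : ∀ z ∈ unitDisc, ‖φ z‖ ≤ r := fun z hz =>
    le_trans (hφr₀ z hz) (le_max_left _ _)
  clear_value r
  obtain ⟨K, hK0, hKb⟩ := keyA h0 hr1
  intro u hu
  have hπ := Real.pi_pos
  have hmeasD : MeasurableSet unitDisc := measurableSet_ball
  have hop : IsOpen unitDisc := isOpen_ball
  have hφdc : ContinuousOn (deriv φ) unitDisc := ((hd.analyticOnNhd hop).deriv).continuousOn
  have hψ := hmult u hu
  -- integrability of ‖u ⬝ φ'‖²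
  have hBint : IntegrableOn (fun z : ℂ => ‖u z * deriv φ z‖ ^ 2) unitDisc := by
    refine ((hψ.2.const_mul 2).add (hu.2.const_mul 2)).mono'
      ((((hu.1.continuousOn.mul hφdc).norm).pow 2).aestronglyMeasurable hmeasD) ?_
    refine (ae_restrict_iff' hmeasD).2 (Filter.Eventually.of_forall fun z hz => ?_)
    have hz' : unitDisc ∈ nhds z := hop.mem_nhds hz
    have hud : DifferentiableAt ℂ u z := hu.1.differentiableAt hz'
    have hφd2 : DifferentiableAt ℂ φ z := hd.differentiableAt hz'
    have hder : deriv (fun z => φ z * u z) z = deriv φ z * u z + φ z * deriv u z :=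
      deriv_mul hφd2 hud
    have heq : u z * deriv φ z = deriv (fun z => φ z * u z) z - φ z * deriv u z := by
      rw [hder]; ring
    rw [Real.norm_eq_abs, _root_.abs_of_nonneg (by positivity), heq]
    have h1 := norm_sub_le (deriv (fun z => φ z * u z) z) (φ z * deriv u z)
    have h2 : ‖φ z * deriv u z‖ ≤ ‖deriv u z‖ := by
      rw [norm_mul]
      nlinarith [hφr z hz, norm_nonneg (deriv u z), norm_nonneg (φ z)]
    simp only [Pi.add_apply]
    nlinarith [norm_nonneg (deriv (fun z => φ z * u z) z - φ z * deriv u z),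
      norm_nonneg (deriv (fun z => φ z * u z) z), norm_nonneg (deriv u z),
      mul_self_le_mul_self (norm_nonneg (deriv (fun z => φ z * u z) z - φ z * deriv u z)) h1,
      sq_nonneg (‖deriv (fun z => φ z * u z) z‖ - ‖deriv u z‖)]
  set A : ℝ := ∫ z in unitDisc, ‖deriv u z‖ ^ 2 with hAdef
  set B : ℝ := ∫ z in unitDisc, ‖u z * deriv φ z‖ ^ 2 with hBdef
  have hA0 : 0 ≤ A := setIntegral_nonneg hmeasD fun z _ => by positivity
  have hB0 : 0 ≤ B := setIntegral_nonneg hmeasD fun z _ => by positivity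
  set Kd : ℝ := K * Real.pi with hKddef
  have hKd0 : 0 ≤ Kd := mul_nonneg hK0 hπ.le
  set Kf : ℝ := 2 + 2 * Kd with hKfdef
  have hKf0 : 0 ≤ Kf := by nlinarith
  clear_value A B Kd Kf
  have hC0 : 0 ≤ ‖u 0‖ ^ 2 * Kf + (1 / Real.pi) * (2 * Kf * A + 2 * Kd * B) := by
    have h1 : 0 ≤ 2 * Kf * A := mul_nonneg (by linarith) hA0
    have h2 : 0 ≤ 2 * Kd * B := mul_nonneg (by linarith) hB0
    have h3 : 0 ≤ ‖u 0‖ ^ 2 * Kf := mul_nonneg (sq_nonneg _) hKf0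
    have h4 : (0:ℝ) ≤ 1 / Real.pi := by positivity
    have h5 := mul_nonneg h4 (add_nonneg h1 h2)
    linarith
  refine ⟨‖u 0‖ ^ 2 * Kf + (1 / Real.pi) * (2 * Kf * A + 2 * Kd * B), hC0, ?_⟩
  intro f hf
  set N : ℝ := dirNormSq f with hNdef
  have hIg0 : 0 ≤ ∫ z in unitDisc, ‖deriv f z‖ ^ 2 :=
    setIntegral_nonneg hmeasD fun z _ => by positivity
  have hN : N = ‖f 0‖ ^ 2 + (1 / Real.pi) * ∫ z in unitDisc, ‖deriv f z‖ ^ 2 := rfl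
  clear_value N
  have hN0 : 0 ≤ N := by
    rw [hN]; positivity
  have hint_le : ∫ z in unitDisc, ‖deriv f z‖ ^ 2 ≤ Real.pi * N := by
    have h5 : Real.pi * ((1 / Real.pi) * ∫ z in unitDisc, ‖deriv f z‖ ^ 2) =
        ∫ z in unitDisc, ‖deriv f z‖ ^ 2 := by
      field_simp
    nlinarith [sq_nonneg ‖f 0‖]
  -- derivative bound on the closed r-ball
  have hd'f : ∀ w : ℂ, ‖w‖ ≤ r → ‖deriv f w‖ ^ 2 ≤ Kd * N := by
    intro w hw
    have h1 := hKb (deriv f) ((hf.1.analyticOnNhd hop).deriv.differentiableOn) hf.2 w hw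
    calc ‖deriv f w‖ ^ 2 ≤ K * ∫ z in unitDisc, ‖deriv f z‖ ^ 2 := h1
      _ ≤ K * (Real.pi * N) := mul_le_mul_of_nonneg_left hint_le hK0
      _ = Kd * N := by rw [hKddef]; ring
  have hd'fs : ∀ w : ℂ, ‖w‖ ≤ r → ‖deriv f w‖ ≤ Real.sqrt (Kd * N) := by
    intro w hw
    have := hd'f w hw
    nlinarith [Real.sq_sqrt (mul_nonneg hKd0 hN0), Real.sqrt_nonneg (Kd * N),
      norm_nonneg (deriv f w)]
  -- value bound on the closed r-ball
  have hfw : ∀ w : ℂ, ‖w‖ ≤ r → ‖f w‖ ^ 2 ≤ Kf * N := by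
    intro w hw
    have h1 := segBound h0 hr1 hf.1 hd'fs hw
    have h2 : ‖f 0‖ ≤ Real.sqrt N := by
      have h3 : ‖f 0‖ ^ 2 ≤ N := by
        rw [hN]; nlinarith [mul_nonneg (by positivity : (0:ℝ) ≤ 1 / Real.pi) hIg0]
      nlinarith [Real.sq_sqrt hN0, Real.sqrt_nonneg N, norm_nonneg (f 0)]
    have h4 : ‖f w‖ ≤ Real.sqrt N + Real.sqrt (Kd * N) := by linarith
    nlinarith [Real.sq_sqrt (mul_nonneg hKd0 hN0), Real.sq_sqrt hN0,
      Real.sqrt_nonneg N, Real.sqrt_nonneg (Kd * N), norm_nonneg (f w),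
      sq_nonneg (Real.sqrt N - Real.sqrt (Kd * N))]
  -- differentiability of the product
  have hcompd : DifferentiableOn ℂ (fun z => u z * f (φ z)) unitDisc :=
    hu.1.mul (hf.1.comp hd hm)
  -- derivative formula and pointwise bound
  have hpoint : ∀ z ∈ unitDisc, ‖deriv (fun z => u z * f (φ z)) z‖ ^ 2 ≤
      2 * Kf * N * ‖deriv u z‖ ^ 2 + 2 * Kd * N * ‖u z * deriv φ z‖ ^ 2 := by
    intro z hz
    have hz' : unitDisc ∈ nhds z := hop.mem_nhds hz
    have hud : DifferentiableAt ℂ u z := hu.1.differentiableAt hz'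
    have hφd2 : DifferentiableAt ℂ φ z := hd.differentiableAt hz'
    have hfd : DifferentiableAt ℂ f (φ z) := hf.1.differentiableAt (hop.mem_nhds (hm hz))
    have hcd : DifferentiableAt ℂ (fun z => f (φ z)) z := hfd.comp z hφd2
    have hchain : deriv (fun z => f (φ z)) z = deriv f (φ z) * deriv φ z :=
      deriv_comp z hfd hφd2
    have hform : deriv (fun z => u z * f (φ z)) z =
        deriv u z * f (φ z) + u z * (deriv f (φ z) * deriv φ z) := by
      rw [deriv_fun_mul hud hcd, hchain]
    rw [hform]
    have hX : ‖deriv u z * f (φ z)‖ ^ 2 ≤ Kf * N * ‖deriv u z‖ ^ 2 := by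
      rw [norm_mul, mul_pow]
      nlinarith [hfw (φ z) (hφr z hz), sq_nonneg ‖deriv u z‖]
    have hY : ‖u z * (deriv f (φ z) * deriv φ z)‖ ^ 2 ≤
        Kd * N * ‖u z * deriv φ z‖ ^ 2 := by
      simp only [norm_mul, mul_pow]
      nlinarith [hd'f (φ z) (hφr z hz), sq_nonneg (‖u z‖ * ‖deriv φ z‖),
        sq_nonneg ‖u z‖, sq_nonneg ‖deriv φ z‖]
    nlinarith [mul_self_le_mul_self (norm_nonneg (deriv u z * f (φ z) + u z * (deriv f (φ z) * deriv φ z)))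
        (norm_add_le (deriv u z * f (φ z)) (u z * (deriv f (φ z) * deriv φ z))),
      sq_nonneg (‖deriv u z * f (φ z)‖ - ‖u z * (deriv f (φ z) * deriv φ z)‖),
      norm_nonneg (deriv u z * f (φ z)), norm_nonneg (u z * (deriv f (φ z) * deriv φ z))]
  have hGint : IntegrableOn
      (fun z => 2 * Kf * N * ‖deriv u z‖ ^ 2 + 2 * Kd * N * ‖u z * deriv φ z‖ ^ 2)
      unitDisc := (hu.2.const_mul _).add (hBint.const_mul _)
  have hhd_int : IntegrableOn (fun z => ‖deriv (fun z => u z * f (φ z)) z‖ ^ 2) unitDisc := by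
    refine hGint.mono'
      (((((hcompd.analyticOnNhd hop).deriv.continuousOn).norm).pow 2).aestronglyMeasurable hmeasD) ?_
    refine (ae_restrict_iff' hmeasD).2 (Filter.Eventually.of_forall fun z hz => ?_)
    rw [Real.norm_eq_abs, _root_.abs_of_nonneg (by positivity)]
    exact hpoint z hz
  refine ⟨⟨hcompd, hhd_int⟩, ?_⟩
  have hIle : ∫ z in unitDisc, ‖deriv (fun z => u z * f (φ z)) z‖ ^ 2 ≤
      2 * Kf * N * A + 2 * Kd * N * B := by
    calc ∫ z in unitDisc, ‖deriv (fun z => u z * f (φ z)) z‖ ^ 2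
        ≤ ∫ z in unitDisc,
          (2 * Kf * N * ‖deriv u z‖ ^ 2 + 2 * Kd * N * ‖u z * deriv φ z‖ ^ 2) :=
          setIntegral_mono_on hhd_int hGint hmeasD hpoint
      _ = 2 * Kf * N * A + 2 * Kd * N * B := by
          rw [integral_add (hu.2.const_mul _) (hBint.const_mul _),
            integral_const_mul, integral_const_mul, hAdef, hBdef]
  have h00 : ‖u 0 * f (φ 0)‖ ^ 2 ≤ ‖u 0‖ ^ 2 * (Kf * N) := by
    rw [norm_mul, mul_pow]
    have h0mem : (0:ℂ) ∈ unitDisc := mem_ball_self zero_lt_one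
    nlinarith [hfw (φ 0) (hφr 0 h0mem), sq_nonneg ‖u 0‖]
  have hfinal : dirNormSq (fun z => u z * f (φ z)) =
      ‖u 0 * f (φ 0)‖ ^ 2 +
        (1 / Real.pi) * ∫ z in unitDisc, ‖deriv (fun z => u z * f (φ z)) z‖ ^ 2 := rfl
  rw [hfinal]
  have h5 : (1 / Real.pi) * (∫ z in unitDisc, ‖deriv (fun z => u z * f (φ z)) z‖ ^ 2) ≤
      (1 / Real.pi) * (2 * Kf * N * A + 2 * Kd * N * B) :=
    mul_le_mul_of_nonneg_left hIle (by positivity)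
  calc ‖u 0 * f (φ 0)‖ ^ 2 +
        (1 / Real.pi) * ∫ z in unitDisc, ‖deriv (fun z => u z * f (φ z)) z‖ ^ 2
      ≤ ‖u 0‖ ^ 2 * (Kf * N) + (1 / Real.pi) * (2 * Kf * N * A + 2 * Kd * N * B) := by
        linarith
    _ = (‖u 0‖ ^ 2 * Kf + (1 / Real.pi) * (2 * Kf * A + 2 * Kd * B)) * N := by ring
end
end

section
/- If g is a multiplier of the Dirichlet space 𝒟 and g is bounded away from zero on 𝔻, i.e., inf_{z∈𝔻} |g(z)| > 0, then 1/g is also a multiplier of 𝒟. -/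
open Complex MeasureTheory Metric Set Filter

noncomputable section

/-- `u` is a multiplier of the Dirichlet space: `u` is holomorphic on `𝔻`
and `u·f ∈ 𝒟` for every `f ∈ 𝒟`. -/
def IsMultiplier (u : ℂ → ℂ) : Prop :=
  DifferentiableOn ℂ u unitDisc ∧
    ∀ f : ℂ → ℂ, MemDirichlet f → MemDirichlet fun z => u z * f z

/-- If `g` is a multiplier of the Dirichlet space which is bounded away from
zero on `𝔻`, then `1/g` is also a multiplier of `𝒟`. -/
theorem inv_multiplier_of_bddBelow (g : ℂ → ℂ) (hg : IsMultiplier g)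
    (hlow : ∃ δ : ℝ, 0 < δ ∧ ∀ z ∈ unitDisc, δ ≤ ‖g z‖) :
    IsMultiplier fun z => (g z)⁻¹ := by
  obtain ⟨δ, hδ, hbd⟩ := hlow
  have hopen : IsOpen unitDisc := isOpen_ball
  have hgz : ∀ z ∈ unitDisc, g z ≠ 0 := by
    intro z hz h0
    have := hbd z hz
    rw [h0, norm_zero] at this
    linarith
  have hginv : DifferentiableOn ℂ (fun z => (g z)⁻¹) unitDisc :=
    hg.1.inv hgz
  refine ⟨hginv, fun f hf => ?_⟩
  have hgf := hg.2 f hf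
  set h : ℂ → ℂ := fun z => g z * f z with hh_def
  refine ⟨hginv.mul hf.1, ?_⟩
  -- key derivative identity on the disc
  have key : ∀ z ∈ unitDisc, deriv (fun z => (g z)⁻¹ * f z) z
      = 2 * deriv f z / g z - deriv h z / (g z) ^ 2 := by
    intro z hz
    have hgd : DifferentiableAt ℂ g z := hg.1.differentiableAt (hopen.mem_nhds hz)
    have hfd : DifferentiableAt ℂ f z := hf.1.differentiableAt (hopen.mem_nhds hz)
    have hg0 := hgz z hz
    have hhd : deriv h z = deriv g z * f z + g z * deriv f z := deriv_mul hgd hfd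
    have h1 : deriv (fun z => (g z)⁻¹ * f z) z
        = deriv (fun z => (g z)⁻¹) z * f z + (g z)⁻¹ * deriv f z :=
      deriv_mul (hgd.inv hg0) hfd
    rw [h1, deriv_fun_inv'' hgd hg0, hhd]
    field_simp
    ring
  -- integrable bound
  have hbound : IntegrableOn
      (fun z : ℂ => 8 / δ ^ 2 * ‖deriv f z‖ ^ 2 + 2 / δ ^ 4 * ‖deriv h z‖ ^ 2)
      unitDisc := by
    exact (hf.2.const_mul _).add (hgf.2.const_mul _)
  refine hbound.mono' ?_ ?_
  · exact ((measurable_deriv _).norm.pow_const 2).aestronglyMeasurable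
  · filter_upwards [ae_restrict_mem hopen.measurableSet] with z hz
    have hg0 := hbd z hz
    have hgpos : (0:ℝ) < ‖g z‖ := lt_of_lt_of_le hδ hg0
    rw [Real.norm_of_nonneg (by positivity), key z hz]
    have h1 : ‖2 * deriv f z / g z - deriv h z / (g z) ^ 2‖
        ≤ 2 * ‖deriv f z‖ / δ + ‖deriv h z‖ / δ ^ 2 := by
      refine (norm_sub_le _ _).trans ?_
      gcongr
      · calc ‖2 * deriv f z / g z‖ = 2 * ‖deriv f z‖ / ‖g z‖ := by
              simp [norm_div, norm_mul]
          _ ≤ 2 * ‖deriv f z‖ / δ := by gcongr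
      · calc ‖deriv h z / (g z) ^ 2‖ = ‖deriv h z‖ / ‖g z‖ ^ 2 := by
              simp [norm_div, norm_pow]
          _ ≤ ‖deriv h z‖ / δ ^ 2 := by gcongr
    calc ‖2 * deriv f z / g z - deriv h z / (g z) ^ 2‖ ^ 2
        ≤ (2 * ‖deriv f z‖ / δ + ‖deriv h z‖ / δ ^ 2) ^ 2 := by
          exact pow_le_pow_left₀ (norm_nonneg _) h1 2
      _ ≤ 8 / δ ^ 2 * ‖deriv f z‖ ^ 2 + 2 / δ ^ 4 * ‖deriv h z‖ ^ 2 := by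
          have h2 : ∀ a b : ℝ, (a + b) ^ 2 ≤ 2 * a ^ 2 + 2 * b ^ 2 := by
            intro a b; nlinarith [sq_nonneg (a - b)]
          have := h2 (2 * ‖deriv f z‖ / δ) (‖deriv h z‖ / δ ^ 2)
          have hδ2 : (0:ℝ) < δ ^ 2 := by positivity
          have hδ4 : (0:ℝ) < δ ^ 4 := by positivity
          calc (2 * ‖deriv f z‖ / δ + ‖deriv h z‖ / δ ^ 2) ^ 2
              ≤ 2 * (2 * ‖deriv f z‖ / δ) ^ 2 + 2 * (‖deriv h z‖ / δ ^ 2) ^ 2 := this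
            _ = 8 / δ ^ 2 * ‖deriv f z‖ ^ 2 + 2 / δ ^ 4 * ‖deriv h z‖ ^ 2 := by
                field_simp; ring
end
end

section
/- Let φ be a parabolic automorphism of the unit disc 𝔻 and let φ_n denote its n-th iterate. Then there exists a constant C > 0 (depending on φ) such that sup_{z∈𝔻} |φ_n′(z)| ≤ C n² for all n ≥ 1. -/
open Complex MeasureTheory Metric Set Filter

noncomputable section

/-- `φ` is a parabolic automorphism of `𝔻`:
`φ(z) = e^{iθ}(p − z)/(1 − \bar{p} z)` with `p ∈ 𝔻`, `−π < θ ≤ π` and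
`|p| = cos(θ/2)`. -/
def IsParabolicAutomorphism (φ : ℂ → ℂ) : Prop :=
  ∃ (θ : ℝ) (p : ℂ), -Real.pi < θ ∧ θ ≤ Real.pi ∧ ‖p‖ < 1 ∧
    ‖p‖ = Real.cos (θ / 2) ∧
    ∀ z ∈ unitDisc,
      φ z = Complex.exp (θ * Complex.I) * (p - z) / (1 - (starRingEnd ℂ) p * z)

/-- coefficients of the n-th iterate as a Möbius map -/
def mA (u : ℂ) (ν : ℂ) : ℂ := (1 - u) - ν * (1 + u)
def mB (u p : ℂ) (ν : ℂ) : ℂ := ν * (2 * u * p)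
def mC (p : ℂ) (ν : ℂ) : ℂ := ν * (-2 * (starRingEnd ℂ) p)
def mD (u : ℂ) (ν : ℂ) : ℂ := (1 - u) + ν * (1 + u)

lemma key_normSq (p w : ℂ) :
    normSq (1 - (starRingEnd ℂ) p * w) - normSq (p - w)
      = (1 - normSq p) * (1 - normSq w) := by
  simp only [normSq_apply, sub_re, sub_im, mul_re, mul_im, one_re, one_im, conj_re, conj_im]
  ring

lemma lc1 (u p w ν : ℂ) (h2 : 4 * u * (p * (starRingEnd ℂ) p) = (1 + u)^2) :
    u * (p * (mC p ν * w + mD u ν) - (mA u ν * w + mB u p ν))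
      = ((1-u)/2) * (mA u (ν+1) * w + mB u p (ν+1)) := by
  simp only [mA, mB, mC, mD]
  linear_combination (-(ν*w)/2) * h2

lemma lc2 (u p w ν : ℂ) (h2 : 4 * u * (p * (starRingEnd ℂ) p) = (1 + u)^2) :
    (mC p ν * w + mD u ν) - (starRingEnd ℂ) p * (mA u ν * w + mB u p ν)
      = ((1-u)/2) * (mC p (ν+1) * w + mD u (ν+1)) := by
  simp only [mA, mB, mC, mD]
  linear_combination (-ν/2) * h2

lemma lcdet (u p ν : ℂ) (h2 : 4 * u * (p * (starRingEnd ℂ) p) = (1 + u)^2) :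
    mA u ν * mD u ν - mB u p ν * mC p ν = (1 - u)^2 := by
  simp only [mA, mB, mC, mD]
  linear_combination (ν^2) * h2

lemma lcnormSq (u p : ℂ) (n : ℕ) (h1 : u * (starRingEnd ℂ) u = 1)
    (h2 : 4 * u * (p * (starRingEnd ℂ) p) = (1 + u)^2) :
    mD u n * (starRingEnd ℂ) (mD u n) - mC p n * (starRingEnd ℂ) (mC p n)
      = (1 - u) * (1 - (starRingEnd ℂ) u) := by
  simp only [mD, mC, map_add, map_sub, map_mul, map_one, map_natCast, map_neg, map_ofNat,
    Complex.conj_conj]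
  linear_combination (-2*(n:ℂ) - (n:ℂ)^2*(1+u) + 4*(n:ℂ)^2*p*((starRingEnd ℂ) p)) * h1
    + (-(n:ℂ)^2*((starRingEnd ℂ) u)) * h2

lemma normSq_CD (u p : ℂ) (n : ℕ) (h1 : u * (starRingEnd ℂ) u = 1)
    (h2 : 4 * u * (p * (starRingEnd ℂ) p) = (1 + u)^2) :
    ‖mD u n‖^2 - ‖mC p n‖^2 = ‖(1:ℂ) - u‖^2 := by
  have hc := lcnormSq u p n h1 h2
  rw [Complex.mul_conj, Complex.mul_conj] at hc
  have h1u : ((1:ℂ) - u) * (starRingEnd ℂ) ((1:ℂ) - u) = (normSq ((1:ℂ)-u) : ℂ) :=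
    Complex.mul_conj _
  rw [map_sub, map_one] at h1u
  rw [h1u] at hc
  have : (normSq (mD u n) : ℝ) - normSq (mC p n) = normSq ((1:ℂ) - u) := by exact_mod_cast hc
  simpa [Complex.normSq_eq_norm_sq] using this

lemma denom_lb (u p : ℂ) (ht : (1:ℂ) - u ≠ 0) (h1 : u * (starRingEnd ℂ) u = 1)
    (h2 : 4 * u * (p * (starRingEnd ℂ) p) = (1 + u)^2) (n : ℕ) (w : ℂ) (hw : ‖w‖ < 1) :
    0 < ‖mD u n‖ + ‖mC p n‖ ∧
      ‖(1:ℂ) - u‖^2 / (‖mD u n‖ + ‖mC p n‖) ≤ ‖mC p n * w + mD u n‖ := by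
  have hsq := normSq_CD u p n h1 h2
  have hs : 0 < ‖(1:ℂ) - u‖ := norm_pos_iff.mpr ht
  have ha : 0 ≤ ‖mD u n‖ := norm_nonneg _
  have hb : 0 ≤ ‖mC p n‖ := norm_nonneg _
  have hab : ‖mC p n‖ < ‖mD u n‖ := by nlinarith
  have hsum : 0 < ‖mD u n‖ + ‖mC p n‖ := by linarith
  refine ⟨hsum, ?_⟩
  have htri : ‖mD u n‖ - ‖mC p n‖ * ‖w‖ ≤ ‖mC p n * w + mD u n‖ := by
    calc ‖mD u n‖ - ‖mC p n‖ * ‖w‖ ≤ ‖mD u n‖ - ‖mC p n * w‖ := by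
          rw [norm_mul]
        _ ≤ ‖mC p n * w + mD u n‖ := by
          rw [add_comm]
          have := norm_sub_norm_le (mD u n) (-(mC p n * w))
          simp only [norm_neg, sub_neg_eq_add] at this
          exact this
  have h2' : ‖(1:ℂ) - u‖^2 / (‖mD u n‖ + ‖mC p n‖) ≤ ‖mD u n‖ - ‖mC p n‖ := by
    rw [div_le_iff₀ hsum]
    nlinarith
  have h3 : ‖mD u n‖ - ‖mC p n‖ ≤ ‖mD u n‖ - ‖mC p n‖ * ‖w‖ := by nlinarith
  linarith

lemma map_disc (θ : ℝ) (p : ℂ) (hp : ‖p‖ < 1) (w : ℂ) (hw : w ∈ unitDisc) :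
    Complex.exp (θ * Complex.I) * (p - w) / (1 - (starRingEnd ℂ) p * w) ∈ unitDisc := by
  rw [unitDisc, mem_ball_zero_iff] at hw ⊢
  have hkey := key_normSq p w
  have hnsp : normSq p < 1 := by
    rw [← Complex.sq_norm]
    nlinarith [norm_nonneg p, hp]
  have hnsw : normSq w < 1 := by
    rw [← Complex.sq_norm]
    nlinarith [norm_nonneg w, hw]
  have hpos : 0 < normSq (1 - (starRingEnd ℂ) p * w) := by
    nlinarith [Complex.normSq_nonneg (p - w)]
  have hden : (1:ℂ) - (starRingEnd ℂ) p * w ≠ 0 := by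
    intro h
    rw [h, Complex.normSq_zero] at hpos
    exact lt_irrefl 0 hpos
  rw [norm_div, norm_mul]
  have hu : ‖Complex.exp (θ * Complex.I)‖ = 1 := by
    rw [Complex.norm_exp_ofReal_mul_I]
  rw [hu, one_mul, div_lt_one (norm_pos_iff.mpr hden)]
  have hlt : normSq (p - w) < normSq (1 - (starRingEnd ℂ) p * w) := by nlinarith
  nlinarith [norm_nonneg (p - w), norm_nonneg (1 - (starRingEnd ℂ) p * w),
    Complex.sq_norm (p - w), Complex.sq_norm (1 - (starRingEnd ℂ) p * w)]

/-- If `φ` is a parabolic automorphism of `𝔻`, then there is a constant `C > 0`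
(depending on `φ`) such that `sup_{z∈𝔻} |φ_n′(z)| ≤ C n²` for all `n ≥ 1`,
where `φ_n` is the `n`-th iterate of `φ`. -/
theorem parabolic_iterate_deriv_bound (φ : ℂ → ℂ)
    (hφ : IsParabolicAutomorphism φ) :
    ∃ C : ℝ, 0 < C ∧ ∀ n : ℕ, 1 ≤ n → ∀ z ∈ unitDisc,
      ‖deriv (φ^[n]) z‖ ≤ C * (n : ℝ) ^ 2 := by
  obtain ⟨θ, p, hθlb, hθub, hp, hpcos, hφeq⟩ := hφ
  set u : ℂ := Complex.exp (θ * Complex.I) with hu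
  -- θ ≠ 0
  have hθ0 : θ ≠ 0 := by
    intro h
    rw [h] at hpcos
    norm_num at hpcos
    rw [hpcos] at hp
    exact lt_irrefl 1 hp
  have hπ : 0 < Real.pi := Real.pi_pos
  have hu1 : u ≠ 1 := by
    intro h
    rw [hu, Complex.exp_eq_one_iff] at h
    obtain ⟨k, hk⟩ := h
    have hI : (Complex.I : ℂ) ≠ 0 := Complex.I_ne_zero
    have hk0' : (θ : ℂ) * Complex.I = ((k : ℂ) * (2 * Real.pi)) * Complex.I := by
      rw [hk]; ring
    have hk' : (θ : ℂ) = (k : ℂ) * (2 * Real.pi) := mul_right_cancel₀ hI hk0'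
    have hkr : θ = (k : ℝ) * (2 * Real.pi) := by exact_mod_cast hk'
    have hk0 : k ≠ 0 := by
      intro h0
      rw [h0] at hkr
      simp at hkr
      exact hθ0 hkr
    have : (1:ℝ) ≤ |(k:ℝ)| := by
      have : (1:ℤ) ≤ |k| := Int.one_le_abs hk0
      exact_mod_cast this
    have habs : |θ| ≤ Real.pi := abs_le.mpr ⟨le_of_lt hθlb, hθub⟩
    rw [hkr, abs_mul] at habs
    have h2π : |2 * Real.pi| = 2 * Real.pi := abs_of_pos (by linarith)
    rw [h2π] at habs
    nlinarith
  have ht : (1:ℂ) - u ≠ 0 := by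
    intro h
    apply hu1
    have := sub_eq_zero.mp h
    exact this.symm
  have hs : 0 < ‖(1:ℂ) - u‖ := norm_pos_iff.mpr ht
  have hconj : (starRingEnd ℂ) u = Complex.exp (-(θ * Complex.I)) := by
    rw [hu, ← Complex.exp_conj]
    congr 1
    simp
  have h1 : u * (starRingEnd ℂ) u = 1 := by
    rw [hconj, hu, ← Complex.exp_add]
    simp
  have h2 : 4 * u * (p * (starRingEnd ℂ) p) = (1 + u)^2 := by
    have hpc : p * (starRingEnd ℂ) p = ((1/2 + Real.cos θ / 2 : ℝ) : ℂ) := by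
      rw [Complex.mul_conj]
      congr 1
      rw [← Complex.sq_norm, hpcos]
      have := Real.cos_sq (θ / 2)
      rw [this]
      ring_nf
    rw [hpc]
    push_cast
    have h2c : 2 * Complex.cos (θ : ℂ) = Complex.exp ((θ:ℂ) * Complex.I) +
        Complex.exp (-(θ:ℂ) * Complex.I) := Complex.two_cos _
    have huu : Complex.exp ((θ:ℂ) * Complex.I) * Complex.exp (-(θ:ℂ) * Complex.I) = 1 := by
      rw [← Complex.exp_add]; ring_nf; exact Complex.exp_zero
    rw [hu]
    linear_combination Complex.exp ((θ:ℂ) * Complex.I) * h2c + huu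
  -- the induction
  have main : ∀ n : ℕ, ∀ w ∈ unitDisc, φ^[n] w =
      (mA u n * w + mB u p n) / (mC p n * w + mD u n) ∧
      (mA u n * w + mB u p n) / (mC p n * w + mD u n) ∈ unitDisc := by
    intro n
    induction n with
    | zero =>
      intro w hw
      have : (mA u ((0:ℕ):ℂ) * w + mB u p ((0:ℕ):ℂ)) / (mC p ((0:ℕ):ℂ) * w + mD u ((0:ℕ):ℂ)) = w := by
        simp only [mA, mB, mC, mD, Nat.cast_zero, zero_mul, sub_zero, mul_zero,
          add_zero, zero_add]
        rw [mul_comm, mul_div_assoc, div_self ht, mul_one]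
      rw [this]
      exact ⟨rfl, hw⟩
    | succ n ih =>
      intro w hw
      obtain ⟨hiter, hmem⟩ := ih w hw
      have hwn : ‖w‖ < 1 := by rwa [unitDisc, mem_ball_zero_iff] at hw
      have hDne : mC p n * w + mD u n ≠ 0 := by
        obtain ⟨hsum, hlb⟩ := denom_lb u p ht h1 h2 n w hwn
        intro h
        rw [h, norm_zero] at hlb
        have : 0 < ‖(1:ℂ) - u‖^2 / (‖mD u n‖ + ‖mC p n‖) :=
          div_pos (pow_pos hs 2) hsum
        linarith
      have hD'ne : mC p (n+1 : ℕ) * w + mD u (n+1 : ℕ) ≠ 0 := by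
        obtain ⟨hsum, hlb⟩ := denom_lb u p ht h1 h2 (n+1) w hwn
        intro h
        rw [h, norm_zero] at hlb
        have : 0 < ‖(1:ℂ) - u‖^2 / (‖mD u (n+1:ℕ)‖ + ‖mC p (n+1:ℕ)‖) :=
          div_pos (pow_pos hs 2) hsum
        linarith
      set N := mA u n * w + mB u p n with hN
      set D := mC p n * w + mD u n with hD
      have hcast : ((n+1 : ℕ) : ℂ) = (n : ℂ) + 1 := by push_cast; ring
      have hNd : u * (p * D - N) = ((1-u)/2) * (mA u ((n+1:ℕ):ℂ) * w + mB u p ((n+1:ℕ):ℂ)) := by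
        rw [hcast]
        exact lc1 u p w n h2
      have hDd : D - (starRingEnd ℂ) p * N
          = ((1-u)/2) * (mC p ((n+1:ℕ):ℂ) * w + mD u ((n+1:ℕ):ℂ)) := by
        rw [hcast]
        exact lc2 u p w n h2
      have hstep : φ (N / D) = (mA u (n+1:ℕ) * w + mB u p (n+1:ℕ)) /
          (mC p (n+1:ℕ) * w + mD u (n+1:ℕ)) := by
        rw [hφeq _ hmem]
        have e1 : p - N/D = (p*D - N)/D := by field_simp
        have e2 : 1 - (starRingEnd ℂ) p * (N/D) = (D - (starRingEnd ℂ) p * N)/D := by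
          field_simp
        rw [e1, e2, mul_div_assoc']
        rw [div_div_div_cancel_right₀ hDne]
        rw [hNd, hDd]
        exact mul_div_mul_left _ _ (by
          intro h
          apply ht
          have : (1:ℂ) - u = 2 * ((1-u)/2) := by ring
          rw [this, h, mul_zero])
      constructor
      · rw [Function.iterate_succ_apply', hiter, hstep]
      · rw [← hstep]
        rw [hφeq _ hmem]
        exact map_disc θ p hp _ hmem
  -- the bound
  set K : ℝ := ‖(1:ℂ) - u‖ + ‖(1:ℂ) + u‖ + 2 * ‖p‖ with hK
  have hKpos : 0 < K := by
    have : 0 ≤ ‖(1:ℂ) + u‖ := norm_nonneg _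
    have : 0 ≤ ‖p‖ := norm_nonneg _
    rw [hK]; positivity
  refine ⟨K^2 / ‖(1:ℂ) - u‖^2, by positivity, ?_⟩
  intro n hn z hz
  have hzn : ‖z‖ < 1 := by rwa [unitDisc, mem_ball_zero_iff] at hz
  obtain ⟨hsum, hlb⟩ := denom_lb u p ht h1 h2 n z hzn
  have hDne : mC p n * z + mD u n ≠ 0 := by
    intro h
    rw [h, norm_zero] at hlb
    have : 0 < ‖(1:ℂ) - u‖^2 / (‖mD u n‖ + ‖mC p n‖) := div_pos (pow_pos hs 2) hsum
    linarith
  -- derivative of the Möbius map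
  have hev : deriv (φ^[n]) z = deriv (fun w => (mA u n * w + mB u p n) /
      (mC p n * w + mD u n)) z := by
    apply Filter.EventuallyEq.deriv_eq
    filter_upwards [isOpen_ball.mem_nhds hz] with w hw
    exact (main n w hw).1
  have hnum : HasDerivAt (fun w : ℂ => mA u n * w + mB u p n) (mA u n) z := by
    simpa using ((hasDerivAt_id z).const_mul (mA u n)).add_const (mB u p n)
  have hden : HasDerivAt (fun w : ℂ => mC p n * w + mD u n) (mC p n) z := by
    simpa using ((hasDerivAt_id z).const_mul (mC p n)).add_const (mD u n)
  have hdiv := hnum.div hden hDne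
  have hval : (mA u n * (mC p n * z + mD u n) - (mA u n * z + mB u p n) * mC p n) /
      (mC p n * z + mD u n)^2 = ((1:ℂ) - u)^2 / (mC p n * z + mD u n)^2 := by
    congr 1
    have := lcdet u p n h2
    linear_combination this
  have hderiv : deriv (φ^[n]) z = ((1:ℂ) - u)^2 / (mC p n * z + mD u n)^2 := by
    rw [hev, ← hval]
    exact hdiv.deriv
  rw [hderiv]
  rw [norm_div, norm_pow, norm_pow]
  -- bound  ‖D‖+‖C‖ ≤ n*K
  have hDb : ‖mD u n‖ ≤ ‖(1:ℂ) - u‖ + n * ‖(1:ℂ) + u‖ := by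
    rw [mD]
    calc ‖(1:ℂ) - u + (n:ℂ) * (1 + u)‖ ≤ ‖(1:ℂ) - u‖ + ‖(n:ℂ) * (1+u)‖ := norm_add_le _ _
      _ = ‖(1:ℂ) - u‖ + n * ‖(1:ℂ)+u‖ := by rw [norm_mul, Complex.norm_natCast]
  have hCb : ‖mC p n‖ ≤ n * (2 * ‖p‖) := by
    rw [mC, norm_mul, Complex.norm_natCast]
    apply mul_le_mul_of_nonneg_left _ (Nat.cast_nonneg n)
    rw [norm_mul, RCLike.norm_conj]
    simp
  have hn1 : (1:ℝ) ≤ (n:ℝ) := by exact_mod_cast hn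
  have hsumK : ‖mD u n‖ + ‖mC p n‖ ≤ n * K := by
    rw [hK]
    nlinarith [norm_nonneg ((1:ℂ) + u), norm_nonneg p]
  have hlow : ‖(1:ℂ) - u‖^2 / (n * K) ≤ ‖mC p n * z + mD u n‖ := by
    refine le_trans ?_ hlb
    apply div_le_div_of_nonneg_left (by positivity) hsum hsumK
  have hnK : 0 < (n:ℝ) * K := by positivity
  have hd2 : (‖(1:ℂ) - u‖^2 / (n * K))^2 ≤ ‖mC p n * z + mD u n‖^2 := by
    apply pow_le_pow_left₀ (by positivity) hlow
  have hdpos : 0 < (‖(1:ℂ) - u‖^2 / (n * K))^2 := by positivity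
  have hfin : ∀ s : ℝ, 0 < s → s^2 / (s^2 / ((n:ℝ) * K))^2 = K^2 / s^2 * (n:ℝ)^2 := by
    intro s hs0
    have hs' : s ≠ 0 := ne_of_gt hs0
    have hn' : (n:ℝ) ≠ 0 := by positivity
    have hK' : K ≠ 0 := ne_of_gt hKpos
    field_simp
  calc ‖(1:ℂ) - u‖^2 / ‖mC p n * z + mD u n‖^2
      ≤ ‖(1:ℂ) - u‖^2 / (‖(1:ℂ) - u‖^2 / (n * K))^2 :=
        div_le_div_of_nonneg_left (le_of_lt (pow_pos hs 2)) hdpos hd2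
    _ = K^2 / ‖(1:ℂ) - u‖^2 * (n:ℝ)^2 := hfin _ hs
end
end
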